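/- Let A₂ : [0,T) → ℝ be nonnegative C² with A₂'' + γA₂' ≤ D·A₂ + D·E₀, A₂(0) = a > 0, A₂'(0) = A₁(0) < 0, where γ, D, E₀ > 0. Set β = (-γ + √(γ² + 4D))/2. If D·(A₂(0) + E₀) + β·A₁(0) < 0, then the coefficient of e^{βt} in the comparison solution, namely A₂(0) + D·E₀/(β(β+γ)) + (A₁(0) - β·A₂(0) - D·E₀/(β+γ))/(γ+2β), is strictly negative; hence A₂(t) becomes negative in finite time, contradicting A₂ ≥ 0 — so T must be finite. -/

import Mathlib

open Real Set

set_option maxHeartbeats 1000000 in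
/-- Blow-up via the second-order differential inequality: if a nonnegative `C²`
function `A₂` satisfied `A₂'' + γA₂' ≤ D·A₂ + D·E₀` globally with `A₂(0) > 0`,
`A₂'(0) < 0` and `D(A₂(0)+E₀) + β·A₂'(0) < 0` (β the positive root of β²+γβ = D),
then the coefficient of `e^{βt}` in the comparison solution is strictly negative and
`A₂` would become negative in finite time — a contradiction, so no such global
nonnegative solution exists (`T` must be finite). -/
theorem stmt9 (γ D E₀ β : ℝ) (hγ : 0 < γ) (hD : 0 < D) (hE₀ : 0 < E₀)
    (hβ : β = (-γ + Real.sqrt (γ ^ 2 + 4 * D)) / 2)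
    (A₂ : ℝ → ℝ) (hC2 : ContDiffOn ℝ 2 A₂ (Ici 0))
    (hnn : ∀ t ∈ Ici (0 : ℝ), 0 ≤ A₂ t)
    (hineq : ∀ t ∈ Ici (0 : ℝ),
      derivWithin (derivWithin A₂ (Ici 0)) (Ici 0) t + γ * derivWithin A₂ (Ici 0) t
        ≤ D * A₂ t + D * E₀)
    (ha : 0 < A₂ 0) (ha' : derivWithin A₂ (Ici 0) 0 < 0)
    (hcond : D * (A₂ 0 + E₀) + β * derivWithin A₂ (Ici 0) 0 < 0) :
    (A₂ 0 + D * E₀ / (β * (β + γ))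
        + (derivWithin A₂ (Ici 0) 0 - β * A₂ 0 - D * E₀ / (β + γ)) / (γ + 2 * β) < 0)
      ∧ False := by
  have hsqnn : (0:ℝ) ≤ γ ^ 2 + 4 * D := by positivity
  have hsq : Real.sqrt (γ ^ 2 + 4 * D) ^ 2 = γ ^ 2 + 4 * D := Real.sq_sqrt hsqnn
  have hsnn : 0 ≤ Real.sqrt (γ ^ 2 + 4 * D) := Real.sqrt_nonneg _
  have hsgt : γ < Real.sqrt (γ ^ 2 + 4 * D) := by nlinarith
  have hβpos : 0 < β := by rw [hβ]; linarith
  have hβD : β * (β + γ) = D := by rw [hβ]; nlinarith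
  have hβγ : 0 < β + γ := by linarith
  have hγ2β : 0 < γ + 2 * β := by linarith
  set f := derivWithin A₂ (Ici 0) with hfdef
  set a := A₂ 0 with ha0
  set v := f 0 with hvdef
  have hane : 0 < a + E₀ := by linarith
  have hcond' : (β + γ) * (a + E₀) + v < 0 := by
    have h1 : β * ((β + γ) * (a + E₀) + v) < 0 := by nlinarith
    nlinarith
  have hw0neg : v - β * (a + E₀) < 0 := by nlinarith
  have hKval : a + D * E₀ / (β * (β + γ)) + (v - β * a - D * E₀ / (β + γ)) / (γ + 2 * β)
      = (a + E₀) + (v - β * (a + E₀)) / (γ + 2 * β) := by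
    have h1 : D * E₀ / (β * (β + γ)) = E₀ := by
      rw [hβD]; field_simp
    have h2 : D * E₀ / (β + γ) = β * E₀ := by
      rw [← hβD]; field_simp
    rw [h1, h2]; ring
  have hK : (a + E₀) + (v - β * (a + E₀)) / (γ + 2 * β) < 0 := by
    have h3 : (v - β * (a + E₀)) / (γ + 2 * β) < -(a + E₀) := by
      rw [div_lt_iff₀ hγ2β]; nlinarith
    linarith
  refine ⟨by rw [hKval]; exact hK, ?_⟩
  -- Analytic part
  have hu : UniqueDiffOn ℝ (Ici (0:ℝ)) := uniqueDiffOn_Ici 0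
  have hA₂d : DifferentiableOn ℝ A₂ (Ici 0) := hC2.differentiableOn two_ne_zero
  have hfC1 : ContDiffOn ℝ 1 f (Ici 0) := hC2.derivWithin hu (by norm_num)
  have hfd : DifferentiableOn ℝ f (Ici 0) := hfC1.differentiableOn one_ne_zero
  have hfc : ContinuousOn f (Ici 0) := hfC1.continuousOn
  have hA₂c : ContinuousOn A₂ (Ici 0) := hC2.continuousOn
  have hA₂x : ∀ x : ℝ, 0 < x → HasDerivAt A₂ (f x) x := by
    intro x hx
    have hmem : Ici (0:ℝ) ∈ nhds x := Ici_mem_nhds hx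
    have hd := (hA₂d x (le_of_lt hx)).differentiableAt hmem
    have h2 : f x = deriv A₂ x := derivWithin_of_mem_nhds hmem
    rw [h2]; exact hd.hasDerivAt
  have hfx : ∀ x : ℝ, 0 < x → HasDerivAt f (derivWithin f (Ici 0) x) x := by
    intro x hx
    have hmem : Ici (0:ℝ) ∈ nhds x := Ici_mem_nhds hx
    have hd := (hfd x (le_of_lt hx)).differentiableAt hmem
    have h2 : derivWithin f (Ici 0) x = deriv f x := derivWithin_of_mem_nhds hmem
    rw [h2]; exact hd.hasDerivAt
  clear_value f a v
  -- first comparison function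
  set g₁ : ℝ → ℝ := fun x => Real.exp ((γ + β) * x) * (f x - β * (A₂ x + E₀)) with hg₁def
  have hg₁' : ∀ x : ℝ, 0 < x → HasDerivAt g₁
      ((γ + β) * Real.exp ((γ + β) * x) * (f x - β * (A₂ x + E₀))
        + Real.exp ((γ + β) * x) * (derivWithin f (Ici 0) x - β * f x)) x := by
    intro x hx
    have he : HasDerivAt (fun y : ℝ => Real.exp ((γ + β) * y))
        ((γ + β) * Real.exp ((γ + β) * x)) x := by
      have h := ((hasDerivAt_id x).const_mul (γ + β)).exp
      convert h using 1
      show _ = Real.exp ((γ + β) * x) * ((γ + β) * 1); ring; rfl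
    have hinner : HasDerivAt (fun y => f y - β * (A₂ y + E₀))
        (derivWithin f (Ici 0) x - β * f x) x :=
      (hfx x hx).sub (((hA₂x x hx).add_const E₀).const_mul β)
    exact he.mul hinner
  have hg₁cont : ContinuousOn g₁ (Ici 0) := by
    apply ContinuousOn.mul
    · exact (Real.continuous_exp.comp (continuous_const.mul continuous_id)).continuousOn
    · exact hfc.sub (((hA₂c.add continuousOn_const)).const_smul β)
  have hg₁anti : AntitoneOn g₁ (Ici 0) := by
    apply antitoneOn_of_deriv_nonpos (convex_Ici 0) hg₁cont
    · intro x hx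
      rw [interior_Ici] at hx
      exact (hg₁' x hx).differentiableAt.differentiableWithinAt
    · intro x hx
      rw [interior_Ici] at hx
      rw [(hg₁' x hx).deriv]
      have hiq := hineq x (mem_Ici.mpr (le_of_lt hx))
      have hrw : β * ((β + γ) * (A₂ x + E₀)) = D * A₂ x + D * E₀ := by
        rw [← hβD]; ring
      have hE := Real.exp_pos ((γ + β) * x)
      have ht : (γ + β) * (f x - β * (A₂ x + E₀)) + (derivWithin f (Ici 0) x - β * f x) ≤ 0 := by
        nlinarith [hiq, hrw]
      nlinarith [mul_nonpos_of_nonneg_of_nonpos hE.le ht]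
  have hwle : ∀ t ∈ Ici (0:ℝ),
      f t - β * (A₂ t + E₀) ≤ (v - β * (a + E₀)) * Real.exp (-((γ + β) * t)) := by
    intro t ht
    have h : Real.exp ((γ + β) * t) * (f t - β * (A₂ t + E₀))
        ≤ Real.exp ((γ + β) * 0) * (f 0 - β * (A₂ 0 + E₀)) := hg₁anti self_mem_Ici ht ht
    rw [mul_zero, Real.exp_zero, one_mul, ← hvdef, ← ha0] at h
    have hinv : Real.exp (-((γ + β) * t)) * Real.exp ((γ + β) * t) = 1 := by
      rw [← Real.exp_add]; simp
    have hEp := Real.exp_pos (-((γ + β) * t))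
    have h3 := mul_le_mul_of_nonneg_left h hEp.le
    rw [← mul_assoc, hinv, one_mul] at h3
    linarith [h3]
  -- second comparison function
  set w0 := v - β * (a + E₀) with hw0def
  clear_value w0
  set g₂ : ℝ → ℝ := fun x => (γ + 2 * β) * (Real.exp (-(β * x)) * (A₂ x + E₀))
      + w0 * Real.exp (-((γ + 2 * β) * x)) with hg₂def
  have hg₂' : ∀ x : ℝ, 0 < x → HasDerivAt g₂
      ((γ + 2 * β) * (Real.exp (-(β * x)) * (f x - β * (A₂ x + E₀)))
        - (γ + 2 * β) * (w0 * Real.exp (-((γ + 2 * β) * x)))) x := by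
    intro x hx
    have he1 : HasDerivAt (fun y : ℝ => Real.exp (-(β * y)))
        (-β * Real.exp (-(β * x))) x := by
      have h := (((hasDerivAt_id x).const_mul β).neg).exp
      convert h using 1
      show _ = Real.exp (-(β * x)) * -(β * 1); ring; rfl
    have he2 : HasDerivAt (fun y : ℝ => Real.exp (-((γ + 2 * β) * y)))
        (-(γ + 2 * β) * Real.exp (-((γ + 2 * β) * x))) x := by
      have h := (((hasDerivAt_id x).const_mul (γ + 2 * β)).neg).exp
      convert h using 1
      show _ = Real.exp (-((γ + 2 * β) * x)) * -((γ + 2 * β) * 1); ring; rfl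
    have h1 : HasDerivAt (fun y => (γ + 2 * β) * (Real.exp (-(β * y)) * (A₂ y + E₀)))
        ((γ + 2 * β) * (-β * Real.exp (-(β * x)) * (A₂ x + E₀) + Real.exp (-(β * x)) * f x)) x :=
      (he1.mul ((hA₂x x hx).add_const E₀)).const_mul _
    have h2 : HasDerivAt (fun y => w0 * Real.exp (-((γ + 2 * β) * y)))
        (w0 * (-(γ + 2 * β) * Real.exp (-((γ + 2 * β) * x)))) x :=
      he2.const_mul _
    refine (h1.add h2).congr_deriv ?_
    ring
  have hg₂cont : ContinuousOn g₂ (Ici 0) := by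
    apply ContinuousOn.add
    · exact continuousOn_const.mul
        ((Real.continuous_exp.comp (continuous_const.mul continuous_id).neg).continuousOn.mul
          (hA₂c.add continuousOn_const))
    · exact (continuous_const.mul
        (Real.continuous_exp.comp (continuous_const.mul continuous_id).neg)).continuousOn
  have hg₂anti : AntitoneOn g₂ (Ici 0) := by
    apply antitoneOn_of_deriv_nonpos (convex_Ici 0) hg₂cont
    · intro x hx
      rw [interior_Ici] at hx
      exact (hg₂' x hx).differentiableAt.differentiableWithinAt
    · intro x hx
      rw [interior_Ici] at hx
      rw [(hg₂' x hx).deriv]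
      have hw := hwle x (mem_Ici.mpr (le_of_lt hx))
      have hEb := Real.exp_pos (-(β * x))
      have h3 := mul_le_mul_of_nonneg_left hw hEb.le
      have hmul : Real.exp (-(β * x)) * (w0 * Real.exp (-((γ + β) * x)))
          = w0 * Real.exp (-((γ + 2 * β) * x)) := by
        have harg : (-(β * x) + -((γ + β) * x)) = -((γ + 2 * β) * x) := by ring
        rw [mul_left_comm, ← Real.exp_add, harg]
      rw [hmul] at h3
      have h4 := mul_le_mul_of_nonneg_left h3 hγ2β.le
      linarith
  have hg₂le : ∀ t ∈ Ici (0:ℝ), (γ + 2 * β) * (Real.exp (-(β * t)) * (A₂ t + E₀))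
      ≤ ((γ + 2 * β) * (a + E₀) + w0) - w0 * Real.exp (-((γ + 2 * β) * t)) := by
    intro t ht
    have h : (γ + 2 * β) * (Real.exp (-(β * t)) * (A₂ t + E₀)) + w0 * Real.exp (-((γ + 2 * β) * t))
        ≤ (γ + 2 * β) * (Real.exp (-(β * 0)) * (A₂ 0 + E₀)) + w0 * Real.exp (-((γ + 2 * β) * 0)) :=
      hg₂anti self_mem_Ici ht ht
    rw [mul_zero, mul_zero, neg_zero, Real.exp_zero, one_mul, mul_one, ← ha0] at h
    linarith
  -- choose large t
  have hw0' : (0:ℝ) < -w0 := by linarith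
  have hMneg : (γ + 2 * β) * (a + E₀) + w0 < 0 := by
    rw [hw0def]; linarith
  have htend : Filter.Tendsto (fun t : ℝ => Real.exp (-((γ + 2 * β) * t)))
      Filter.atTop (nhds 0) := by
    apply Real.tendsto_exp_atBot.comp
    exact Filter.tendsto_neg_atBot_iff.mpr (Filter.Tendsto.const_mul_atTop hγ2β Filter.tendsto_id)
  have hpos : 0 < (-((γ + 2 * β) * (a + E₀) + w0)) / (-w0) := div_pos (by linarith) hw0'
  obtain ⟨t, htlt, ht0⟩ :=
    ((htend.eventually_lt_const hpos).and (Filter.eventually_ge_atTop (0:ℝ))).exists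
  have hle := hg₂le t ht0
  have h4 : Real.exp (-((γ + 2 * β) * t)) * (-w0)
      < -((γ + 2 * β) * (a + E₀) + w0) := (lt_div_iff₀ hw0').mp htlt
  have hnnt := hnn t ht0
  have hgt : 0 < (γ + 2 * β) * (Real.exp (-(β * t)) * (A₂ t + E₀)) := by
    have := Real.exp_pos (-(β * t))
    positivity
  nlinarith
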